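/- There exists a linear functional L on the space of real-valued functions on EVEN_n such that L(1) = 1, L(f²) ≥ 0 for every function f on EVEN_n that is (the restriction of) a polynomial of degree at most ⌈n/4⌉ − 1, and yet L((n−2) + x_n − ∑_{i=1}^{n−1} x_i) = −2 < 0, even though the function (n−2) + x_n − ∑_{i=1}^{n−1} x_i is nonnegative on EVEN_n. Consequently, (n−2)+x_n−∑_{i<n}x_i is not a sum of squares of polynomials of degree ≤ ⌈n/4⌉−1 on EVEN_n, i.e., the theta-rank of EVEN_n is at least ⌈n/4⌉. -/

import Mathlib

/-- The set `EVEN_n` of `±1` vectors with an even number of `-1`'s, as a type. -/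
def EvenPt (n : ℕ) : Type :=
  {x : Fin n → ℝ // (∀ i, x i = 1 ∨ x i = -1) ∧ ∏ i, x i = 1}

/-- `f : EVEN_n → ℝ` is (the restriction of) a polynomial of total degree at most `k`. -/
def IsPolyDegLE (n k : ℕ) (f : EvenPt n → ℝ) : Prop :=
  ∃ p : MvPolynomial (Fin n) ℝ, p.totalDegree ≤ k ∧
    ∀ x : EvenPt n, f x = MvPolynomial.eval x.1 p

/-- The affine function `ℓ(x) = (n-2) + x_n - ∑_{i<n} x_i` on `EVEN_n`. -/
def lfun (n : ℕ) (hn : 1 ≤ n) : EvenPt n → ℝ := fun x =>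
  ((n : ℝ) - 2) + x.1 ⟨n - 1, by omega⟩ -
    ∑ i ∈ Finset.univ.filter (fun i : Fin n => (i : ℕ) < n - 1), x.1 i

namespace ParityAux

open Finset

noncomputable section

def sgn (b : Bool) : ℝ := if b then 1 else -1

lemma sgn_mul_self (b : Bool) : sgn b * sgn b = 1 := by cases b <;> simp [sgn]

lemma sgn_pm (b : Bool) : sgn b = 1 ∨ sgn b = -1 := by cases b <;> simp [sgn]

def ptv (m : ℕ) (b : Fin m → Bool) : Fin (m+1) → ℝ :=
  fun i => if h : (i : ℕ) < m then sgn (b ⟨i, h⟩) else ∏ j, sgn (b j)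

lemma ptv_castSucc (m : ℕ) (b : Fin m → Bool) (j : Fin m) :
    ptv m b (Fin.castSucc j) = sgn (b j) := by
  simp [ptv, j.isLt]

lemma ptv_last (m : ℕ) (b : Fin m → Bool) :
    ptv m b (Fin.last m) = ∏ j, sgn (b j) := by
  simp [ptv]

lemma prod_sgn_mul_self (m : ℕ) (b : Fin m → Bool) :
    (∏ j, sgn (b j)) * (∏ j, sgn (b j)) = 1 := by
  rw [← Finset.prod_mul_distrib]
  simp [sgn_mul_self]

lemma ptv_pm (m : ℕ) (b : Fin m → Bool) : ∀ i, ptv m b i = 1 ∨ ptv m b i = -1 := by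
  intro i
  unfold ptv
  split
  · exact sgn_pm _
  · exact mul_self_eq_one_iff.mp (prod_sgn_mul_self m b)

lemma ptv_prod (m : ℕ) (b : Fin m → Bool) : ∏ i, ptv m b i = 1 := by
  rw [Fin.prod_univ_castSucc]
  simp only [ptv_castSucc, ptv_last]
  exact prod_sgn_mul_self m b

def pt (m : ℕ) (b : Fin m → Bool) : EvenPt (m+1) := by
  unfold EvenPt
  exact ⟨ptv m b, ptv_pm m b, ptv_prod m b⟩

/-- character sum over the boolean cube -/
lemma sum_char (m : ℕ) (T : Finset (Fin m)) :
    ∑ b : Fin m → Bool, ∏ j ∈ T, sgn (b j) = if T = ∅ then (2:ℝ)^m else 0 := by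
  have h1 : ∀ b : Fin m → Bool,
      ∏ j ∈ T, sgn (b j) = ∏ j : Fin m, (if j ∈ T then sgn (b j) else 1) := by
    intro b
    rw [Finset.prod_ite_mem, Finset.univ_inter]
  calc ∑ b : Fin m → Bool, ∏ j ∈ T, sgn (b j)
      = ∑ b ∈ Fintype.piFinset (fun _ : Fin m => (Finset.univ : Finset Bool)),
          ∏ j : Fin m, (if j ∈ T then sgn (b j) else 1) := by
        rw [Fintype.piFinset_univ]
        exact Finset.sum_congr rfl (fun b _ => h1 b)
    _ = ∏ j : Fin m, ∑ y : Bool, (if j ∈ T then sgn y else 1) :=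
        (Finset.prod_univ_sum (fun _ : Fin m => (Finset.univ : Finset Bool))
          (fun j y => if j ∈ T then sgn y else 1)).symm
    _ = ∏ j : Fin m, (if j ∈ T then (0:ℝ) else 2) := by
        apply Finset.prod_congr rfl
        intro j _
        by_cases hj : j ∈ T <;> simp [hj, sgn]
    _ = if T = ∅ then (2:ℝ)^m else 0 := by
        by_cases hT : T = ∅
        · simp [hT]
        · rw [if_neg hT]
          obtain ⟨j, hj⟩ := Finset.nonempty_iff_ne_empty.mpr hT
          exact Finset.prod_eq_zero (Finset.mem_univ j) (by simp [hj])

/-- monomial sum over EVEN -/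
lemma sum_mono (m : ℕ) (U : Finset (Fin (m+1))) :
    ∑ b : Fin m → Bool, ∏ i ∈ U, ptv m b i
      = if U = ∅ ∨ U = Finset.univ then (2:ℝ)^m else 0 := by
  have h1 : ∀ b : Fin m → Bool,
      ∏ i ∈ U, ptv m b i = ∏ i : Fin (m+1), (if i ∈ U then ptv m b i else 1) := by
    intro b; rw [Finset.prod_ite_mem, Finset.univ_inter]
  by_cases hlast : Fin.last m ∈ U
  · have h2 : ∀ b : Fin m → Bool,
        ∏ i ∈ U, ptv m b i = ∏ j ∈ univ.filter (fun j : Fin m => Fin.castSucc j ∉ U), sgn (b j) := by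
      intro b
      rw [h1 b, Fin.prod_univ_castSucc]
      simp only [ptv_castSucc, ptv_last, if_pos hlast]
      rw [← Finset.prod_mul_distrib]
      rw [Finset.prod_filter]
      apply Finset.prod_congr rfl
      intro j _
      by_cases hj : Fin.castSucc j ∈ U <;> simp [hj, sgn_mul_self]
    simp only [h2]
    rw [sum_char]
    have hUne : U ≠ ∅ := fun h => by simp [h] at hlast
    have : (univ.filter (fun j : Fin m => Fin.castSucc j ∉ U) = ∅) ↔ U = univ := by
      rw [Finset.filter_eq_empty_iff]
      constructor
      · intro h
        apply Finset.eq_univ_iff_forall.mpr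
        intro i
        rcases Fin.eq_castSucc_or_eq_last i with ⟨j, rfl⟩ | rfl
        · by_contra hc; exact (h (Finset.mem_univ j)) hc
        · exact hlast
      · intro h j _; simp [h]
    rw [if_congr this rfl rfl]
    try simp [hUne]
  · have h2 : ∀ b : Fin m → Bool,
        ∏ i ∈ U, ptv m b i = ∏ j ∈ univ.filter (fun j : Fin m => Fin.castSucc j ∈ U), sgn (b j) := by
      intro b
      rw [h1 b, Fin.prod_univ_castSucc]
      simp only [ptv_castSucc, ptv_last, if_neg hlast, mul_one]
      rw [Finset.prod_filter]
    simp only [h2]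
    rw [sum_char]
    have hUnu : U ≠ univ := fun h => hlast (h ▸ Finset.mem_univ _)
    have : (univ.filter (fun j : Fin m => Fin.castSucc j ∈ U) = ∅) ↔ U = ∅ := by
      rw [Finset.filter_eq_empty_iff]
      constructor
      · intro h
        apply Finset.eq_empty_iff_forall_notMem.mpr
        intro i hi
        rcases Fin.eq_castSucc_or_eq_last i with ⟨j, rfl⟩ | rfl
        · exact h (Finset.mem_univ j) hi
        · exact hlast hi
      · intro h j _; simp [h]
    rw [if_congr this rfl rfl]
    try simp [hUnu]

lemma prod_symmDiff {N : ℕ} (x : Fin N → ℝ) (hx : ∀ i, x i = 1 ∨ x i = -1)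
    (S S0 : Finset (Fin N)) :
    (∏ i ∈ S, x i) * (∏ i ∈ S0, x i) = ∏ i ∈ (symmDiff S S0), x i := by
  have hsq : ∏ i ∈ S ∩ S0, (x i * x i) = 1 :=
    Finset.prod_eq_one (fun i _ => by rcases hx i with h | h <;> rw [h] <;> norm_num)
  have e1 : (∏ i ∈ S, x i) = (∏ i ∈ S \ S0, x i) * ∏ i ∈ S ∩ S0, x i := by
    rw [← Finset.sdiff_inter_self_left S S0]
    exact (Finset.prod_sdiff (Finset.inter_subset_left)).symm
  have e2 : (∏ i ∈ S0, x i) = (∏ i ∈ S0 \ S, x i) * ∏ i ∈ S ∩ S0, x i := by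
    rw [Finset.inter_comm]
    rw [← Finset.sdiff_inter_self_left S0 S]
    exact (Finset.prod_sdiff (Finset.inter_subset_left)).symm
  have hCC : (∏ i ∈ S ∩ S0, x i) * (∏ i ∈ S ∩ S0, x i) = 1 := by
    rw [← Finset.prod_mul_distrib]; exact hsq
  rw [e1, e2, symmDiff_def, Finset.sup_eq_union]
  rw [Finset.prod_union disjoint_sdiff_sdiff]
  rw [mul_mul_mul_comm, hCC, mul_one]

def wt (m mdeg : ℕ) (b : Fin m → Bool) : ℝ :=
  ((2:ℝ)^m)⁻¹ * ∑ S ∈ Finset.univ.filter (fun S : Finset (Fin (m+1)) => S.card ≤ mdeg),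
    (if Fin.last m ∈ S then (-1:ℝ) else 1) * ∏ i ∈ S, ptv m b i

lemma pairing (m mdeg : ℕ) (hdeg : 2 * mdeg < m + 1) (S0 : Finset (Fin (m+1)))
    (hS0 : S0.card ≤ mdeg) :
    ∑ b : Fin m → Bool, wt m mdeg b * ∏ i ∈ S0, ptv m b i
      = (if Fin.last m ∈ S0 then (-1:ℝ) else 1) := by
  unfold wt
  have step1 : ∀ b : Fin m → Bool,
      (((2:ℝ)^m)⁻¹ * ∑ S ∈ Finset.univ.filter (fun S : Finset (Fin (m+1)) => S.card ≤ mdeg),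
        (if Fin.last m ∈ S then (-1:ℝ) else 1) * ∏ i ∈ S, ptv m b i) * ∏ i ∈ S0, ptv m b i
      = ((2:ℝ)^m)⁻¹ * ∑ S ∈ Finset.univ.filter (fun S : Finset (Fin (m+1)) => S.card ≤ mdeg),
        (if Fin.last m ∈ S then (-1:ℝ) else 1) * ∏ i ∈ (symmDiff S S0), ptv m b i := by
    intro b
    rw [mul_assoc, Finset.sum_mul]
    congr 1
    apply Finset.sum_congr rfl
    intro S _
    rw [mul_assoc, prod_symmDiff (ptv m b) (ptv_pm m b)]
  simp only [step1]
  rw [← Finset.mul_sum, Finset.sum_comm]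
  have step2 : ∀ S ∈ Finset.univ.filter (fun S : Finset (Fin (m+1)) => S.card ≤ mdeg),
      ∑ b : Fin m → Bool, (if Fin.last m ∈ S then (-1:ℝ) else 1) * ∏ i ∈ (symmDiff S S0), ptv m b i
      = if S = S0 then (if Fin.last m ∈ S0 then (-1:ℝ) else 1) * (2:ℝ)^m else 0 := by
    intro S hS
    rw [← Finset.mul_sum, sum_mono]
    rw [Finset.mem_filter] at hS
    have hSne : ¬ symmDiff S S0 = Finset.univ := by
      intro h
      have hsub : symmDiff S S0 ⊆ S ∪ S0 := by
        rw [symmDiff_def, Finset.sup_eq_union]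
        exact Finset.union_subset_union Finset.sdiff_subset Finset.sdiff_subset
      have h1 : (symmDiff S S0).card ≤ (S ∪ S0).card := Finset.card_le_card hsub
      have h2 : (S ∪ S0).card ≤ S.card + S0.card := Finset.card_union_le S S0
      rw [h, Finset.card_univ, Fintype.card_fin] at h1
      omega
    by_cases hSS0 : S = S0
    · subst hSS0
      have he : symmDiff S S = (∅ : Finset (Fin (m+1))) := by
        rw [symmDiff_self]; rfl
      rw [he]
      simp
    · have hne : ¬ symmDiff S S0 = ∅ := fun h => hSS0 (symmDiff_eq_bot.mp h)
      rw [if_neg (by simp [hne, hSne] : ¬ (symmDiff S S0 = ∅ ∨ symmDiff S S0 = Finset.univ))]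
      rw [if_neg hSS0, mul_zero]
  have hrw := Finset.sum_congr rfl step2
  rw [hrw]
  rw [Finset.sum_ite_eq' _ S0]
  have hmem : S0 ∈ Finset.univ.filter (fun S : Finset (Fin (m+1)) => S.card ≤ mdeg) := by
    simp [hS0]
  rw [if_pos hmem]
  have h2 : ((2:ℝ)^m) ≠ 0 := by positivity
  field_simp

def zvec (m : ℕ) : Fin (m+1) → ℝ := fun i => if i = Fin.last m then -1 else 1

lemma pow_reduce {N : ℕ} (x : Fin N → ℝ) (hx : ∀ i, x i = 1 ∨ x i = -1) (d : Fin N →₀ ℕ) :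
    ∏ i, x i ^ d i = ∏ i ∈ Finset.univ.filter (fun i => d i % 2 = 1), x i := by
  rw [Finset.prod_filter]
  apply Finset.prod_congr rfl
  intro i _
  rcases hx i with h | h
  · simp [h]
  · rw [h]
    rcases Nat.even_or_odd (d i) with he | ho
    · rw [he.neg_one_pow]
      have : d i % 2 = 0 := Nat.even_iff.mp he
      simp [this]
    · rw [ho.neg_one_pow]
      have : d i % 2 = 1 := Nat.odd_iff.mp ho
      simp [this]

lemma L_eval (m mdeg : ℕ) (hdeg : 2 * mdeg < m + 1) (p : MvPolynomial (Fin (m+1)) ℝ)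
    (hp : p.totalDegree ≤ mdeg) :
    ∑ b : Fin m → Bool, wt m mdeg b * MvPolynomial.eval (ptv m b) p
      = MvPolynomial.eval (zvec m) p := by
  have hzpm : ∀ i, zvec m i = 1 ∨ zvec m i = -1 := by
    intro i; unfold zvec; split <;> simp
  have hd : ∀ d ∈ p.support,
      (Finset.univ.filter (fun i => d i % 2 = 1)).card ≤ mdeg := by
    intro d hdsup
    have h1 : (Finset.univ.filter (fun i => d i % 2 = 1)).card ≤ ∑ i, d i := by
      rw [Finset.card_eq_sum_ones]
      calc ∑ _i ∈ Finset.univ.filter (fun i => d i % 2 = 1), 1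
          ≤ ∑ i ∈ Finset.univ.filter (fun i => d i % 2 = 1), d i := by
            apply Finset.sum_le_sum
            intro i hi
            rw [Finset.mem_filter] at hi
            omega
        _ ≤ ∑ i, d i := Finset.sum_le_sum_of_subset (Finset.filter_subset _ _)
    have h2 : ∑ i, d i ≤ p.totalDegree := by
      have h3 := MvPolynomial.le_totalDegree hdsup
      rwa [Finsupp.sum_fintype _ _ (fun i => rfl)] at h3
    omega
  have lhs1 : ∀ b : Fin m → Bool, MvPolynomial.eval (ptv m b) p
      = ∑ d ∈ p.support, MvPolynomial.coeff d p *
          ∏ i ∈ Finset.univ.filter (fun i => d i % 2 = 1), ptv m b i := by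
    intro b
    rw [MvPolynomial.eval_eq']
    apply Finset.sum_congr rfl
    intro d _
    rw [pow_reduce (ptv m b) (ptv_pm m b)]
  have rhs1 : MvPolynomial.eval (zvec m) p
      = ∑ d ∈ p.support, MvPolynomial.coeff d p *
          (if Fin.last m ∈ Finset.univ.filter (fun i => d i % 2 = 1) then (-1:ℝ) else 1) := by
    rw [MvPolynomial.eval_eq']
    apply Finset.sum_congr rfl
    intro d _
    congr 1
    rw [pow_reduce (zvec m) hzpm]
    have : ∀ i ∈ Finset.univ.filter (fun i => d i % 2 = 1), zvec m i
        = if i = Fin.last m then (-1:ℝ) else 1 := fun i _ => rfl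
    rw [Finset.prod_congr rfl this, Finset.prod_ite_eq']
  calc ∑ b : Fin m → Bool, wt m mdeg b * MvPolynomial.eval (ptv m b) p
      = ∑ b : Fin m → Bool, ∑ d ∈ p.support, MvPolynomial.coeff d p *
          (wt m mdeg b * ∏ i ∈ Finset.univ.filter (fun i => d i % 2 = 1), ptv m b i) := by
        apply Finset.sum_congr rfl
        intro b _
        rw [lhs1 b, Finset.mul_sum]
        apply Finset.sum_congr rfl
        intro d _
        ring
    _ = ∑ d ∈ p.support, ∑ b : Fin m → Bool, MvPolynomial.coeff d p *
          (wt m mdeg b * ∏ i ∈ Finset.univ.filter (fun i => d i % 2 = 1), ptv m b i) :=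
        Finset.sum_comm
    _ = ∑ d ∈ p.support, MvPolynomial.coeff d p *
          (if Fin.last m ∈ Finset.univ.filter (fun i => d i % 2 = 1) then (-1:ℝ) else 1) := by
        apply Finset.sum_congr rfl
        intro d hdsup
        rw [← Finset.mul_sum]
        congr 1
        exact pairing m mdeg hdeg _ (hd d hdsup)
    _ = MvPolynomial.eval (zvec m) p := rhs1.symm

def Lmap (m mdeg : ℕ) : ((EvenPt (m+1)) → ℝ) →ₗ[ℝ] ℝ where
  toFun g := ∑ b : Fin m → Bool, wt m mdeg b * g (pt m b)
  map_add' g h := by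
    simp only [Pi.add_apply, mul_add]
    rw [Finset.sum_add_distrib]
  map_smul' r g := by
    simp only [Pi.smul_apply, smul_eq_mul, RingHom.id_apply]
    rw [Finset.mul_sum]
    apply Finset.sum_congr rfl
    intro b _
    ring

lemma Lmap_apply (m mdeg : ℕ) (g : EvenPt (m+1) → ℝ) :
    Lmap m mdeg g = ∑ b : Fin m → Bool, wt m mdeg b * g (pt m b) := rfl

lemma pt_val (m : ℕ) (b : Fin m → Bool) : (pt m b).1 = ptv m b := rfl

lemma lfun_eval (m : ℕ) (h : 1 ≤ m + 1) (x : EvenPt (m+1)) :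
    lfun (m+1) h x = ((m:ℝ) - 1) + x.1 (Fin.last m) - ∑ j : Fin m, x.1 (Fin.castSucc j) := by
  unfold lfun
  have e1 : x.1 ⟨m + 1 - 1, by omega⟩ = x.1 (Fin.last m) := rfl
  have e2 : ∑ i ∈ Finset.univ.filter (fun i : Fin (m+1) => (i:ℕ) < m + 1 - 1), x.1 i
      = ∑ j : Fin m, x.1 (Fin.castSucc j) := by
    rw [Finset.sum_filter, Fin.sum_univ_castSucc]
    simp
  rw [e1, e2]
  push_cast
  ring

lemma lfun_nonneg (m : ℕ) (hm : 1 ≤ m) (h : 1 ≤ m + 1) (x : EvenPt (m+1)) :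
    0 ≤ lfun (m+1) h x := by
  rw [lfun_eval]
  obtain ⟨hpm, hprod⟩ := x.2
  rw [Fin.prod_univ_castSucc] at hprod
  have hb : ∀ j : Fin m, x.1 (Fin.castSucc j) ≤ 1 := by
    intro j; rcases hpm (Fin.castSucc j) with h' | h' <;> rw [h'] <;> norm_num
  rcases hpm (Fin.last m) with hl | hl
  · have hs : ∑ j : Fin m, x.1 (Fin.castSucc j) ≤ (m:ℝ) := by
      calc ∑ j : Fin m, x.1 (Fin.castSucc j) ≤ ∑ _j : Fin m, (1:ℝ) :=
            Finset.sum_le_sum fun j _ => hb j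
        _ = m := by simp
    rw [hl]; linarith
  · rw [hl] at hprod ⊢
    have hprodneg : ∏ j : Fin m, x.1 (Fin.castSucc j) = -1 := by linarith
    have hex : ∃ j0 : Fin m, x.1 (Fin.castSucc j0) = -1 := by
      by_contra hc
      push_neg at hc
      have h1 : ∏ j : Fin m, x.1 (Fin.castSucc j) = 1 :=
        Finset.prod_eq_one fun j _ => (hpm _).resolve_right (hc j)
      rw [h1] at hprodneg; norm_num at hprodneg
    obtain ⟨j0, hj0⟩ := hex
    have hsplit := Finset.sum_eq_sum_sdiff_singleton_add (Finset.mem_univ j0)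
      (fun j => x.1 (Fin.castSucc j))
    have hs1 : ∑ j ∈ Finset.univ \ {j0}, x.1 (Fin.castSucc j) ≤ (m:ℝ) - 1 := by
      calc ∑ j ∈ Finset.univ \ {j0}, x.1 (Fin.castSucc j)
          ≤ ∑ _j ∈ Finset.univ \ {j0}, (1:ℝ) := Finset.sum_le_sum fun j _ => hb j
        _ = ((Finset.univ \ ({j0} : Finset (Fin m))).card : ℝ) := by simp
        _ = (m:ℝ) - 1 := by
            rw [Finset.card_sdiff_of_subset (Finset.subset_univ _), Finset.card_univ, Fintype.card_fin,
              Finset.card_singleton, Nat.cast_sub hm, Nat.cast_one]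
    have hs2 : ∑ j : Fin m, x.1 (Fin.castSucc j) ≤ (m:ℝ) - 2 := by
      rw [hsplit]
      linarith
    linarith

end

end ParityAux

open ParityAux in
/-- The function `ℓ(x) = (n-2) + x_n - ∑_{i<n} x_i` is nonnegative on `EVEN_n`, yet
there is a linear functional `L` on functions on `EVEN_n` with `L(1) = 1`,
`L(f²) ≥ 0` for every polynomial `f` of degree `≤ ⌈n/4⌉ - 1`, and `L(ℓ) = -2 < 0`.
Consequently `ℓ` is not a sum of squares of polynomials of degree `≤ ⌈n/4⌉ - 1`
on `EVEN_n`, i.e. the theta-rank of `EVEN_n` is at least `⌈n/4⌉`. -/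
theorem parity_theta_rank_lower_bound (n : ℕ) (hn : 3 ≤ n) :
    (∀ x : EvenPt n, 0 ≤ lfun n (by omega) x) ∧
    (∃ L : (EvenPt n → ℝ) →ₗ[ℝ] ℝ,
      L (fun _ => 1) = 1 ∧
      (∀ f : EvenPt n → ℝ, IsPolyDegLE n ((n + 3) / 4 - 1) f →
        0 ≤ L (fun x => f x ^ 2)) ∧
      L (lfun n (by omega)) = -2) ∧
    ¬ ∃ (J : ℕ) (f : Fin J → EvenPt n → ℝ),
        (∀ j, IsPolyDegLE n ((n + 3) / 4 - 1) (f j)) ∧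
        ∀ x : EvenPt n, lfun n (by omega) x = ∑ j, f j x ^ 2 := by
  obtain ⟨m, rfl⟩ : ∃ m, n = m + 1 := ⟨n - 1, by omega⟩
  have hm : 2 ≤ m := by omega
  set kk := (m + 1 + 3) / 4 - 1 with hkk
  set md := max 1 (2 * kk) with hmd
  have hdeg : 2 * md < m + 1 := by omega
  have h1md : 1 ≤ md := le_max_left _ _
  -- the linear functional
  set L := Lmap m md with hL
  -- L(1) = 1
  have hL1 : L (fun _ => (1:ℝ)) = 1 := by
    rw [hL, Lmap_apply]
    have hp := pairing m md hdeg ∅ (by simp)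
    simpa using hp
  -- L(f^2) ≥ 0 for low-degree f
  have hLsq : ∀ f : EvenPt (m+1) → ℝ, IsPolyDegLE (m+1) kk f → 0 ≤ L (fun x => f x ^ 2) := by
    intro f hf
    obtain ⟨p, hpd, hpe⟩ := hf
    have hsqdeg : (p ^ 2).totalDegree ≤ md :=
      le_trans (MvPolynomial.totalDegree_pow p 2) (by omega)
    have heq : L (fun x => f x ^ 2) = MvPolynomial.eval (zvec m) (p ^ 2) := by
      rw [hL, Lmap_apply, ← L_eval m md hdeg (p ^ 2) hsqdeg]
      apply Finset.sum_congr rfl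
      intro b _
      congr 1
      rw [hpe (pt m b), pt_val, map_pow]
    rw [heq, map_pow]
    exact sq_nonneg _
  -- the linear polynomial representing lfun
  set P : MvPolynomial (Fin (m+1)) ℝ :=
    MvPolynomial.C ((m:ℝ) - 1) + MvPolynomial.X (Fin.last m)
      - ∑ j : Fin m, MvPolynomial.X (Fin.castSucc j) with hP
  have hPdeg : P.totalDegree ≤ 1 := by
    rw [hP]
    apply le_trans (MvPolynomial.totalDegree_sub _ _)
    apply max_le
    · apply le_trans (MvPolynomial.totalDegree_add _ _)
      apply max_le
      · rw [MvPolynomial.totalDegree_C]; omega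
      · rw [MvPolynomial.totalDegree_X]
    · apply le_trans (MvPolynomial.totalDegree_finset_sum _ _)
      apply Finset.sup_le
      intro j _
      rw [MvPolynomial.totalDegree_X]
  have hPeval : ∀ (h' : 1 ≤ m + 1) (x : EvenPt (m+1)),
      lfun (m+1) h' x = MvPolynomial.eval x.1 P := by
    intro h' x
    rw [lfun_eval m h' x, hP]
    simp [map_sum]
  have hPz : MvPolynomial.eval (zvec m) P = -2 := by
    rw [hP]
    have hz1 : ∀ j : Fin m,
        MvPolynomial.eval (zvec m) (MvPolynomial.X (Fin.castSucc j) : MvPolynomial (Fin (m+1)) ℝ)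
          = 1 := by
      intro j
      rw [MvPolynomial.eval_X]
      unfold zvec
      rw [if_neg (Fin.castSucc_lt_last j).ne]
    rw [map_sub, map_add, MvPolynomial.eval_C, MvPolynomial.eval_X, map_sum,
      Finset.sum_congr rfl (fun j _ => hz1 j)]
    unfold zvec
    simp
    ring
  have hLl : ∀ h' : 1 ≤ m + 1, L (lfun (m+1) h') = -2 := by
    intro h'
    have e1 : L (lfun (m+1) h')
        = ∑ b : Fin m → Bool, wt m md b * MvPolynomial.eval (ptv m b) P := by
      rw [hL, Lmap_apply]
      exact Finset.sum_congr rfl fun b _ => by rw [hPeval h' (pt m b), pt_val]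
    rw [e1, L_eval m md hdeg P (le_trans hPdeg h1md), hPz]
  refine ⟨fun x => lfun_nonneg m (by omega) _ x, ⟨L, hL1, hLsq, hLl _⟩, ?_⟩
  rintro ⟨J, f, hf, hsum⟩
  have hfun : lfun (m+1) (by omega) = ∑ j : Fin J, (fun x => f j x ^ 2) := by
    funext x
    rw [hsum x]
    simp
  have hc := congrArg L hfun
  rw [hLl _, map_sum] at hc
  have hge : 0 ≤ ∑ j : Fin J, L (fun x => f j x ^ 2) :=
    Finset.sum_nonneg fun j _ => hLsq (f j) (hf j)
  rw [← hc] at hge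
  linarith
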